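/- For every valid answer (S,I) ∈ M(P,μ), {b, c} ∩ W(S,I) ≠ ∅; that is, if the algorithm has not stopped and the strict confidence event holds, then for every valid answer at least one of the leader b and the challenger c is under-explored. -/

import Mathlib

noncomputable section
open scoped Classical
open Metric Set

abbrev Evec (d : ℕ) := EuclideanSpace ℝ (Fin d)

def Pdom {d : ℕ} (x y : Evec d) : Prop := (∀ c, x c ≤ y c) ∧ x ≠ y

def PolySet {d m : ℕ} (A : Fin m → Fin d → ℝ) (bvec : Fin m → ℝ) : Set (Evec d) :=
  {x | ∀ j, ∑ c, A j c * x c ≤ bvec j}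

def etaD {d : ℕ} (P : Set (Evec d)) (x : Evec d) : ℝ :=
  if x ∈ P then infDist x Pᶜ else infDist x P

def FeasSet {K d : ℕ} (P : Set (Evec d)) (μ : Fin K → Evec d) : Set (Fin K) := {i | μ i ∈ P}

def OptSet {K d : ℕ} (P : Set (Evec d)) (μ : Fin K → Evec d) : Set (Fin K) :=
  {i | μ i ∈ P ∧ ∀ j, μ j ∈ P → ¬ Pdom (μ i) (μ j)}

def SubOptSet {K d : ℕ} (P : Set (Evec d)) (μ : Fin K → Evec d) : Set (Fin K) :=
  {i | ∃ j, μ j ∈ P ∧ Pdom (μ i) (μ j)}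

def ValidAnswer {K d : ℕ} (P : Set (Evec d)) (μ : Fin K → Evec d) (S I : Set (Fin K)) : Prop :=
  S ⊆ SubOptSet P μ ∧ I ⊆ (FeasSet P μ)ᶜ ∧ S ∩ I = ∅ ∧ S ∪ I = (OptSet P μ)ᶜ

def bigM {K d : ℕ} (μ : Fin K → Evec d) (i j : Fin K) : ℝ := ⨆ c, (μ i c - μ j c)

def smallm {K d : ℕ} (μ : Fin K → Evec d) (i j : Fin K) : ℝ := ⨅ c, (μ j c - μ i c)

/-- The sub-optimality gap `max_{j ∈ O*} m(i,j)` of an arm (as an extended real). -/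
def pGapSub {K d : ℕ} (P : Set (Evec d)) (μ : Fin K → Evec d) (i : Fin K) : EReal :=
  ⨆ j ∈ OptSet P μ, ((smallm μ i j : ℝ) : EReal)

/-- The gap `Δ_i(S)` (extended-real valued; minima over empty sets are `+∞`). -/
def pGap {K d : ℕ} (P : Set (Evec d)) (μ : Fin K → Evec d) (S : Set (Fin K)) (i : Fin K) :
    EReal :=
  if i ∈ OptSet P μ then
    min (⨅ j ∈ OptSet P μ \ {i}, ((min (bigM μ i j) (bigM μ j i) : ℝ) : EReal))
        (⨅ j ∈ S, (((max (bigM μ j i) 0 : ℝ) : EReal) + pGapSub P μ j))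
  else pGapSub P μ i

/-- The under-explored set `W(S,I) = W¹(S) ∪ W²(I) ∪ W³(S)`. -/
def Wunder {K d : ℕ} (P : Set (Evec d)) (μ : Fin K → Evec d) (S I : Set (Fin K))
    (β U : Fin K → ℝ) : Set (Fin K) :=
  {i | i ∈ OptSet P μ ∧ (pGap P μ S i ≤ ((4 * β i : ℝ) : EReal) ∨ etaD P (μ i) ≤ 2 * U i)} ∪
  {i | i ∈ I ∧ etaD P (μ i) ≤ 2 * U i} ∪
  {i | i ∈ S ∧ pGap P μ S i ≤ ((4 * β i : ℝ) : EReal)}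

section Helpers

variable {K d : ℕ}

lemma bddA (f : Fin d → ℝ) : BddAbove (Set.range f) := (Set.finite_range f).bddAbove
lemma bddB (f : Fin d → ℝ) : BddBelow (Set.range f) := (Set.finite_range f).bddBelow

lemma bigM_le (hd : 0 < d) {μ : Fin K → Evec d} {i j : Fin K} {r : ℝ}
    (h : ∀ α, μ i α - μ j α ≤ r) : bigM μ i j ≤ r := by
  haveI : Nonempty (Fin d) := ⟨⟨0, hd⟩⟩
  exact ciSup_le h

lemma le_bigM {μ : Fin K → Evec d} (i j : Fin K) (α : Fin d) :
    μ i α - μ j α ≤ bigM μ i j :=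
  le_ciSup (f := fun α => μ i α - μ j α) (bddA _) α

lemma bigM_attain (hd : 0 < d) (μ : Fin K → Evec d) (i j : Fin K) :
    ∃ α, bigM μ i j = μ i α - μ j α := by
  haveI : Nonempty (Fin d) := ⟨⟨0, hd⟩⟩
  obtain ⟨α, hα⟩ := Finite.exists_max (fun α => μ i α - μ j α)
  exact ⟨α, le_antisymm (ciSup_le hα) (le_bigM i j α)⟩

lemma smallm_le {μ : Fin K → Evec d} (i j : Fin K) (α : Fin d) :
    smallm μ i j ≤ μ j α - μ i α :=
  ciInf_le (f := fun α => μ j α - μ i α) (bddB _) α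

lemma le_smallm (hd : 0 < d) {μ : Fin K → Evec d} {i j : Fin K} {r : ℝ}
    (h : ∀ α, r ≤ μ j α - μ i α) : r ≤ smallm μ i j := by
  haveI : Nonempty (Fin d) := ⟨⟨0, hd⟩⟩
  exact le_ciInf h

lemma smallm_attain (hd : 0 < d) (μ : Fin K → Evec d) (i j : Fin K) :
    ∃ α, smallm μ i j = μ j α - μ i α := by
  haveI : Nonempty (Fin d) := ⟨⟨0, hd⟩⟩
  obtain ⟨α, hα⟩ := Finite.exists_min (fun α => μ j α - μ i α)
  exact ⟨α, le_antisymm (smallm_le i j α) (le_ciInf hα)⟩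

lemma smallm_eq_neg_bigM (hd : 0 < d) (μ : Fin K → Evec d) (i j : Fin K) :
    smallm μ i j = -bigM μ i j := by
  obtain ⟨α, hα⟩ := bigM_attain hd μ i j
  obtain ⟨α', hα'⟩ := smallm_attain hd μ i j
  have h1 : smallm μ i j ≤ -bigM μ i j := by
    rw [hα]; have := smallm_le (μ := μ) i j α; linarith
  have h2 : -bigM μ i j ≤ smallm μ i j := by
    rw [hα']; have := le_bigM (μ := μ) i j α'; linarith
  linarith

lemma smallm_trans (hd : 0 < d) (μ : Fin K → Evec d) (i j k : Fin K) :
    smallm μ i j + smallm μ j k ≤ smallm μ i k := by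
  apply le_smallm hd
  intro α
  have h1 := smallm_le (μ := μ) i j α
  have h2 := smallm_le (μ := μ) j k α
  linarith

lemma smallm_le_bigM (hd : 0 < d) (μ : Fin K → Evec d) (i j : Fin K) :
    smallm μ j i ≤ bigM μ i j := by
  have h1 := smallm_le (μ := μ) j i ⟨0, hd⟩
  have h2 := le_bigM (μ := μ) i j ⟨0, hd⟩
  linarith

lemma pdom_of_smallm_pos (hd : 0 < d) {μ : Fin K → Evec d} {i j : Fin K}
    (h : 0 < smallm μ i j) : Pdom (μ i) (μ j) := by
  have hlt : ∀ α, μ i α < μ j α := by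
    intro α
    have := smallm_le (μ := μ) i j α
    linarith
  refine ⟨fun α => (hlt α).le, fun he => ?_⟩
  exact absurd (congrArg (fun v : Evec d => v ⟨0, hd⟩) he) (ne_of_lt (hlt ⟨0, hd⟩))

lemma bigM_nonpos_of_pdom (hd : 0 < d) {μ : Fin K → Evec d} {i j : Fin K}
    (h : Pdom (μ i) (μ j)) : bigM μ i j ≤ 0 :=
  bigM_le hd fun α => by have := h.1 α; linarith

/-- attainment of a binary sup over a set of a finite type, given it exceeds a real -/
lemma sup_attain {K : ℕ} {s : Set (Fin K)} {f : Fin K → ℝ} {r : ℝ}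
    (h : (r : EReal) < ⨆ j ∈ s, ((f j : ℝ) : EReal)) :
    ∃ k ∈ s, r < f k ∧ (∀ j ∈ s, f j ≤ f k) ∧
      (⨆ j ∈ s, ((f j : ℝ) : EReal)) = ((f k : ℝ) : EReal) := by
  rcases s.eq_empty_or_nonempty with hs | hs
  · rw [hs] at h; simp at h
  obtain ⟨k, hk, hmax⟩ := Set.exists_max_image s f s.toFinite hs
  have heq : (⨆ j ∈ s, ((f j : ℝ) : EReal)) = ((f k : ℝ) : EReal) := by
    apply le_antisymm
    · exact iSup₂_le fun j hj => EReal.coe_le_coe_iff.2 (hmax j hj)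
    · exact le_iSup₂_of_le k hk le_rfl
  rw [heq] at h
  exact ⟨k, hk, EReal.coe_lt_coe_iff.1 h, hmax, heq⟩

lemma sup_attain_nonneg {K : ℕ} {s : Set (Fin K)} {f : Fin K → ℝ}
    (h : (0 : EReal) ≤ ⨆ j ∈ s, ((f j : ℝ) : EReal)) :
    ∃ k ∈ s, 0 ≤ f k := by
  rcases s.eq_empty_or_nonempty with hs | hs
  · rw [hs] at h; simp at h
  obtain ⟨k, hk, hmax⟩ := Set.exists_max_image s f s.toFinite hs
  have heq : (⨆ j ∈ s, ((f j : ℝ) : EReal)) = ((f k : ℝ) : EReal) := by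
    apply le_antisymm
    · exact iSup₂_le fun j hj => EReal.coe_le_coe_iff.2 (hmax j hj)
    · exact le_iSup₂_of_le k hk le_rfl
  rw [heq] at h
  exact ⟨k, hk, by exact_mod_cast h⟩

lemma inf_exists_neg {K : ℕ} {s : Set (Fin K)} {f : Fin K → ℝ}
    (h : (⨅ j ∈ s, ((f j : ℝ) : EReal)) < 0) :
    ∃ k ∈ s, f k < 0 := by
  by_contra hc
  push_neg at hc
  have : (0 : EReal) ≤ ⨅ j ∈ s, ((f j : ℝ) : EReal) :=
    le_iInf₂ fun j hj => by exact_mod_cast hc j hj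
  exact absurd h (not_lt.2 this)

lemma le_sup_set {K : ℕ} {s : Set (Fin K)} {f : Fin K → ℝ} {k : Fin K} (hk : k ∈ s) :
    ((f k : ℝ) : EReal) ≤ ⨆ j ∈ s, ((f j : ℝ) : EReal) :=
  le_iSup₂_of_le k hk le_rfl

lemma inf_le_set {K : ℕ} {s : Set (Fin K)} {f : Fin K → ℝ} {k : Fin K} (hk : k ∈ s) :
    (⨅ j ∈ s, ((f j : ℝ) : EReal)) ≤ ((f k : ℝ) : EReal) :=
  iInf₂_le_of_le k hk le_rfl

lemma bigM_trans (hd : 0 < d) (μ : Fin K → Evec d) (i j k : Fin K) :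
    bigM μ i k ≤ bigM μ i j + bigM μ j k := by
  apply bigM_le hd
  intro α
  have h1 := le_bigM (μ := μ) i j α
  have h2 := le_bigM (μ := μ) j k α
  linarith

end Helpers
/-- if the algorithm has not stopped and the strict confidence event
holds, then for every valid answer `(S, I)` at least one of the leader `b` and the
challenger `c` is under-explored. -/
theorem stmt13 {K d m : ℕ} (hK : 0 < K) (hd : 0 < d) (hm : 0 < m)
    (A : Fin m → Fin d → ℝ) (bvec : Fin m → ℝ)
    (P : Set (Evec d)) (hPdef : P = PolySet A bvec)
    (μ μhat : Fin K → Evec d)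
    (N : Fin K → ℕ) (hN : ∀ i, 1 ≤ N i)
    (σ σu f g : ℝ) (hσ : 0 < σ) (hσu : 0 < σu) (hf : 0 < f) (hg : 0 < g)
    (β U : Fin K → ℝ)
    (hβ : ∀ i, β i = σ * Real.sqrt (2 * f / (N i : ℝ)))
    (hU : ∀ i, U i = σu * Real.sqrt (2 * g / (N i : ℝ)))
    (hconf1 : ∀ i, ∀ c, |μhat i c - μ i c| < β i)
    (hconf2 : ∀ i, ‖μhat i - μ i‖ < U i)
    (Fhat Ohat G : Set (Fin K)) (ηhat γ : Fin K → ℝ)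
    (hFhat : Fhat = FeasSet P μhat)
    (hOhat : Ohat = OptSet P μhat)
    (hηhat : ∀ i, ηhat i = etaD P (μhat i))
    (hγ : ∀ i, γ i = (N i : ℝ) * (ηhat i) ^ 2 / (2 * σu ^ 2) - g)
    (hG : G = {i | i ∉ Fhat ∧ γ i < 0})
    (Mhatm mhatm : Fin K → Fin K → ℝ)
    (hMhatm : ∀ i j, Mhatm i j = bigM μhat i j - (β i + β j))
    (hmhatm : ∀ i j, mhatm i j = smallm μhat i j - (β i + β j))
    (ξ T : Fin K → EReal)
    (hξ : ∀ i, ξ i = ⨆ j ∈ (Fhat ∪ G) \ {i}, ((mhatm i j : ℝ) : EReal))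
    (hT : ∀ i, (i ∈ Fhat → T i = ξ i) ∧ (i ∉ Fhat → T i = max ((γ i : ℝ) : EReal) (ξ i)))
    (Z1F Z1PS Z1 Z2 : EReal)
    (hZ1F : Z1F = ⨅ i ∈ Ohat, ((γ i : ℝ) : EReal))
    (hZ1PS : Z1PS = ⨅ i ∈ Ohat, ⨅ j ∈ Ohat \ {i}, ((Mhatm i j : ℝ) : EReal))
    (hZ1 : Z1 = min Z1F Z1PS)
    (hZ2 : Z2 = ⨅ i ∈ Ohatᶜ, T i)
    (hnotstop : Z1 < 0 ∨ Z2 < 0)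
    (b c : Fin K)
    (hb1 : Z2 < 0 → b ∉ Ohat ∧ T b = Z2)
    (hb2 : 0 ≤ Z2 → Z1F ≤ Z1PS → b ∈ Ohat ∧ ((γ b : ℝ) : EReal) = Z1F)
    (hb3 : 0 ≤ Z2 → Z1PS < Z1F → b ∈ Ohat ∧
      (⨅ j ∈ Ohat \ {b}, ((Mhatm b j : ℝ) : EReal)) = Z1PS)
    (hFG : ((Fhat ∪ G) \ {b}).Nonempty)
    (hc1 : c ∈ (Fhat ∪ G) \ {b})
    (hc2 : ∀ j ∈ (Fhat ∪ G) \ {b}, Mhatm b c ≤ Mhatm b j)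
    :
    ∀ S I : Set (Fin K), ValidAnswer P μ S I →
      b ∈ Wunder P μ S I β U ∨ c ∈ Wunder P μ S I β U := by
  intro S I hSI
  by_contra hcon
  push_neg at hcon
  obtain ⟨hbW, hcW⟩ := hcon
  obtain ⟨hSsub, hIsub, hSIdisj, hSIU⟩ := hSI
  -- positivity
  have hNpos : ∀ i, (0:ℝ) < (N i : ℝ) := fun i => by
    exact_mod_cast Nat.lt_of_lt_of_le Nat.zero_lt_one (hN i)
  have hβpos : ∀ i, 0 < β i := fun i => by
    rw [hβ i]
    have h2 : (0:ℝ) < 2 * f / (N i : ℝ) := div_pos (by linarith) (hNpos i)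
    exact mul_pos hσ (Real.sqrt_pos.2 h2)
  have hUpos : ∀ i, 0 < U i := fun i => by
    rw [hU i]
    have h2 : (0:ℝ) < 2 * g / (N i : ℝ) := div_pos (by linarith) (hNpos i)
    exact mul_pos hσu (Real.sqrt_pos.2 h2)
  -- confidence bounds on bigM
  have CB1 : ∀ i j, bigM μhat i j < bigM μ i j + (β i + β j) := by
    intro i j
    obtain ⟨α, hα⟩ := bigM_attain hd μhat i j
    have h1 := (abs_lt.1 (hconf1 i α))
    have h2 := (abs_lt.1 (hconf1 j α))
    have h3 := le_bigM (μ := μ) i j α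
    rw [hα]
    simp only [EuclideanSpace, PiLp, WithLp] at *
    linarith [h1.1, h1.2, h2.1, h2.2]
  have CB2 : ∀ i j, bigM μ i j < bigM μhat i j + (β i + β j) := by
    intro i j
    obtain ⟨α, hα⟩ := bigM_attain hd μ i j
    have h1 := (abs_lt.1 (hconf1 i α))
    have h2 := (abs_lt.1 (hconf1 j α))
    have h3 := le_bigM (μ := μhat) i j α
    rw [hα]
    linarith [h1.1, h1.2, h2.1, h2.2]
  have dconf : ∀ i, dist (μ i) (μhat i) < U i := fun i => by
    rw [dist_comm, dist_eq_norm]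
    exact hconf2 i
  -- eta facts
  have hηhatnn : ∀ i, 0 ≤ ηhat i := fun i => by
    rw [hηhat i, etaD]; split <;> exact infDist_nonneg
  have hγiff : ∀ i, γ i < 0 ↔ ηhat i < U i := by
    intro i
    have hU2 : (N i : ℝ) * U i ^ 2 = 2 * σu ^ 2 * g := by
      have hN0 : (N i : ℝ) ≠ 0 := ne_of_gt (hNpos i)
      rw [hU i, mul_pow, Real.sq_sqrt (le_of_lt (div_pos (by linarith) (hNpos i)))]
      field_simp
    have hηnn := hηhatnn i
    have hUp := hUpos i
    have hNp := hNpos i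
    have hσup : (0:ℝ) < 2 * σu ^ 2 := by positivity
    rw [hγ i, sub_neg, div_lt_iff₀ hσup]
    constructor
    · intro h
      by_contra hle
      push_neg at hle
      have h2 : U i ^ 2 ≤ ηhat i ^ 2 := pow_le_pow_left₀ (le_of_lt hUp) hle 2
      nlinarith
    · intro h
      have h2 : ηhat i ^ 2 < U i ^ 2 := pow_lt_pow_left₀ h hηnn (by norm_num)
      nlinarith [mul_lt_mul_of_pos_left h2 hNp]
  -- classification lemmas
  have hFhatFG : ∀ i, μ i ∈ P → i ∈ Fhat ∪ G := by
    intro i hi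
    by_cases hF : i ∈ Fhat
    · exact Or.inl hF
    · right
      rw [hG]
      refine ⟨hF, ?_⟩
      have hμh : μhat i ∉ P := by rw [hFhat] at hF; exact hF
      apply (hγiff i).2
      rw [hηhat i, etaD, if_neg hμh]
      calc infDist (μhat i) P ≤ dist (μhat i) (μ i) := infDist_le_dist_of_mem hi
        _ < U i := by rw [dist_eq_norm]; exact hconf2 i
  have hfeas_hat : ∀ i, μ i ∈ P → 2 * U i < etaD P (μ i) → i ∈ Fhat := by
    intro i hi h2
    by_contra hF
    have hμh : μhat i ∉ P := by rw [hFhat] at hF; exact hF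
    have h3 : etaD P (μ i) ≤ dist (μ i) (μhat i) := by
      rw [etaD, if_pos hi]
      exact infDist_le_dist_of_mem hμh
    have := dconf i
    have := hUpos i
    linarith
  have hinfeas : ∀ i, i ∈ Fhat ∪ G → μ i ∉ P → etaD P (μ i) < 2 * U i := by
    intro i hi hμ
    rw [etaD, if_neg hμ]
    rcases hi with hF | hGi
    · have hμh : μhat i ∈ P := by rw [hFhat] at hF; exact hF
      have h1 : infDist (μ i) P ≤ dist (μ i) (μhat i) := infDist_le_dist_of_mem hμh
      have := dconf i
      have := hUpos i
      linarith
    · rw [hG] at hGi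
      have hμh : μhat i ∉ P := by
        intro hmem
        exact hGi.1 (by rw [hFhat]; exact hmem)
      have hη : ηhat i < U i := (hγiff i).1 hGi.2
      rw [hηhat i, etaD, if_neg hμh] at hη
      have h1 : infDist (μ i) P ≤ infDist (μhat i) P + dist (μ i) (μhat i) :=
        infDist_le_infDist_add_dist
      have := dconf i
      linarith
  have hOF : ∀ i, i ∈ Ohat → i ∈ Fhat := fun i hi => by
    rw [hOhat] at hi
    rw [hFhat]
    exact hi.1
  -- partition
  have hpart : ∀ i, i ∈ OptSet P μ ∨ i ∈ S ∨ i ∈ I := by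
    intro i
    by_cases h : i ∈ OptSet P μ
    · exact Or.inl h
    · right
      have : i ∈ S ∪ I := by rw [hSIU]; exact h
      exact this
  have hSO : ∀ i, i ∈ S → i ∉ OptSet P μ := by
    intro i hi h
    have h2 : i ∈ S ∪ I := Or.inl hi
    rw [hSIU] at h2
    exact h2 h
  have hIO : ∀ i, i ∈ I → i ∉ OptSet P μ := by
    intro i hi h
    have h2 : i ∈ S ∪ I := Or.inr hi
    rw [hSIU] at h2
    exact h2 h
  -- W unfolding
  simp only [Wunder, Set.mem_union, Set.mem_setOf_eq, not_or] at hbW hcW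
  push_neg at hbW hcW
  obtain ⟨⟨hbW1, hbW2⟩, hbW3⟩ := hbW
  obtain ⟨⟨hcW1, hcW2⟩, hcW3⟩ := hcW
  -- c facts
  have hcb : c ≠ b := by
    have := hc1.2
    simp at this
    exact this
  have hcFG : c ∈ Fhat ∪ G := hc1.1
  have hcnotI : c ∉ I := by
    intro hcI
    have hμc : μ c ∉ P := hIsub hcI
    have h1 := hinfeas c hcFG hμc
    have h2 := hcW2 hcI
    linarith
  have hcOS : c ∈ OptSet P μ ∨ c ∈ S := by
    rcases hpart c with h | h | h
    · exact Or.inl h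
    · exact Or.inr h
    · exact absurd h hcnotI
  -- gap extraction for optimal arms
  have hgapO : ∀ i, i ∈ OptSet P μ → ((4 * β i : ℝ) : EReal) < pGap P μ S i →
      (∀ j, j ∈ OptSet P μ → j ≠ i → 4 * β i < min (bigM μ i j) (bigM μ j i)) ∧
      (∀ j, j ∈ S → ((4 * β i : ℝ) : EReal) <
        ((max (bigM μ j i) 0 : ℝ) : EReal) + pGapSub P μ j) := by
    intro i hi h
    rw [pGap, if_pos hi] at h
    have h1 := lt_of_lt_of_le h (min_le_left _ _)
    have h2 := lt_of_lt_of_le h (min_le_right _ _)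
    constructor
    · intro j hj hji
      have h3 : (⨅ j ∈ OptSet P μ \ {i}, ((min (bigM μ i j) (bigM μ j i) : ℝ) : EReal))
          ≤ ((min (bigM μ i j) (bigM μ j i) : ℝ) : EReal) :=
        iInf₂_le_of_le j ⟨hj, hji⟩ le_rfl
      have := lt_of_lt_of_le h1 h3
      exact_mod_cast this
    · intro j hj
      exact lt_of_lt_of_le h2 (iInf₂_le_of_le j hj le_rfl)
  by_cases hZ2neg : Z2 < 0
  · -- CASE 1: leader from Z2
    obtain ⟨hbO, hTb⟩ := hb1 hZ2neg
    have hξb : ξ b < 0 := by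
      by_cases hbF : b ∈ Fhat
      · have h2 := (hT b).1 hbF
        rw [h2] at hTb
        rw [hTb]
        exact hZ2neg
      · have h2 := (hT b).2 hbF
        have h3 : ξ b ≤ T b := by rw [h2]; exact le_max_right _ _
        rw [hTb] at h3
        exact lt_of_le_of_lt h3 hZ2neg
    have hγbneg : b ∉ Fhat → γ b < 0 := by
      intro hbF
      have h2 := (hT b).2 hbF
      have h3 : ((γ b : ℝ) : EReal) ≤ T b := by rw [h2]; exact le_max_left _ _
      rw [hTb] at h3
      have h4 : ((γ b : ℝ) : EReal) < ((0:ℝ) : EReal) := by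
        exact_mod_cast lt_of_le_of_lt h3 hZ2neg
      exact_mod_cast h4
    have hXI : ∀ j ∈ (Fhat ∪ G) \ {b}, mhatm b j < 0 := by
      intro j hj
      have h1 : ((mhatm b j : ℝ) : EReal) ≤ ξ b := by
        rw [hξ b]
        exact le_sup_set hj
      have h4 : ((mhatm b j : ℝ) : EReal) < ((0:ℝ):EReal) := by
        exact_mod_cast lt_of_le_of_lt h1 hξb
      exact_mod_cast h4
    have hK0 : -(2 * (β b + β c)) < Mhatm b c := by
      have h1 := hXI c hc1
      rw [hmhatm, smallm_eq_neg_bigM hd] at h1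
      rw [hMhatm]
      linarith
    have hK1 : ∀ j ∈ (Fhat ∪ G) \ {b}, smallm μ b j < 2 * (β b + β c) := by
      intro j hj
      have h1 := hc2 j hj
      have h2 : Mhatm b j < bigM μ b j := by
        rw [hMhatm]
        have h5 := CB1 b j
        have := hβpos b
        have := hβpos j
        linarith
      rw [smallm_eq_neg_bigM hd]
      linarith
    rcases hpart b with hbOs | hbS | hbI
    · -- 1-O*: b truly optimal
      obtain ⟨hΔb, hηb⟩ := hbW1 hbOs
      have hbF : b ∈ Fhat := hfeas_hat b hbOs.1 hηb
      have hnd : ¬ (∀ j, μhat j ∈ P → ¬ Pdom (μhat b) (μhat j)) := by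
        intro hall
        exact hbO (by
          rw [hOhat]
          exact ⟨(by rw [hFhat] at hbF; exact hbF), hall⟩)
      push_neg at hnd
      obtain ⟨j₀, hj₀P, hj₀dom⟩ := hnd
      have hj₀b : j₀ ≠ b := by
        intro h
        subst h
        exact hj₀dom.2 rfl
      have hj₀FG : j₀ ∈ (Fhat ∪ G) \ {b} := ⟨Or.inl (by rw [hFhat]; exact hj₀P), by simp [hj₀b]⟩
      have hMj₀ : bigM μhat b j₀ ≤ 0 := bigM_nonpos_of_pdom hd hj₀dom
      have hG1 : bigM μ b c < 2 * (β b + β c) := by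
        have h1 := hc2 j₀ hj₀FG
        have h2 : Mhatm b j₀ < 0 := by
          rw [hMhatm]
          have := hβpos b
          have := hβpos j₀
          linarith
        have h3 : bigM μ b c - 2 * (β b + β c) < Mhatm b c := by
          rw [hMhatm]
          have := CB2 b c
          linarith
        linarith
      obtain ⟨hgb1, hgb2⟩ := hgapO b hbOs hΔb
      rcases hcOS with hcOs | hcS
      · -- 1-O*-O*
        obtain ⟨hΔc, hηc⟩ := hcW1 hcOs
        obtain ⟨hgc1, _⟩ := hgapO c hcOs hΔc
        have h1 := hgb1 c hcOs hcb
        have h2 := hgc1 b hbOs (Ne.symm hcb)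
        have h3 := min_le_left (bigM μ b c) (bigM μ c b)
        have h4 := min_le_right (bigM μ c b) (bigM μ b c)
        linarith
      · -- 1-O*-S
        have hcO' : c ∉ OptSet P μ := hSO c hcS
        have hΔc : ((4 * β c : ℝ) : EReal) < pGapSub P μ c := by
          have := hcW3 hcS
          rw [pGap, if_neg hcO'] at this
          exact this
        rw [pGapSub] at hΔc
        obtain ⟨jc, hjcO, hjc1, hjcmax, hjceq⟩ := sup_attain hΔc
        by_cases hjcb : jc = b
        · rw [hjcb] at hjc1 hjceq
          have hgb2c := hgb2 c hcS
          have hps : pGapSub P μ c = ((smallm μ c b : ℝ) : EReal) := by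
            rw [pGapSub]; exact hjceq
          rw [hps, ← EReal.coe_add] at hgb2c
          have h6 : 4 * β b < max (bigM μ c b) 0 + smallm μ c b := by exact_mod_cast hgb2c
          have hMt : bigM μ c b = - smallm μ c b := by
            rw [smallm_eq_neg_bigM hd]; ring
          have hmax0 : max (bigM μ c b) 0 = 0 := by
            rw [max_eq_right]
            rw [hMt]
            linarith [hβpos c, hjc1]
          rw [hmax0, zero_add] at h6
          have h5 := smallm_le_bigM hd μ b c
          linarith [hβpos b, hβpos c, hG1, hjc1]
        · have h1 := hgb1 jc hjcO hjcb
          have htr := bigM_trans hd μ b c jc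
          have h4 : bigM μ c jc = - smallm μ c jc := by
            rw [smallm_eq_neg_bigM hd]; ring
          have h3 := min_le_left (bigM μ b jc) (bigM μ jc b)
          linarith [hβpos b, hβpos c, hG1, hjc1]
    · -- 1-S: b truly suboptimal
      have hbO' : b ∉ OptSet P μ := hSO b hbS
      have hΔb : ((4 * β b : ℝ) : EReal) < pGapSub P μ b := by
        have := hbW3 hbS
        rw [pGap, if_neg hbO'] at this
        exact this
      rw [pGapSub] at hΔb
      obtain ⟨k, hkO, hk1, hkmax, hkeq⟩ := sup_attain hΔb
      have hkb : k ≠ b := by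
        intro h
        subst h
        have := smallm_le (μ := μ) k k ⟨0, hd⟩
        have := hβpos k
        linarith [smallm_le (μ := μ) k k ⟨0, hd⟩, hβpos k, hk1]
      have hkFG : k ∈ (Fhat ∪ G) \ {b} := ⟨hFhatFG k hkO.1, by simp [hkb]⟩
      have hS1 : β b < β c := by
        have := hK1 k hkFG
        linarith
      have hE1 : Mhatm b c < - smallm μ b k := by
        have h1 := hc2 k hkFG
        have h2 : Mhatm b k < bigM μ b k := by
          rw [hMhatm]
          have := CB1 b k
          have := hβpos b
          have := hβpos k
          linarith
        have h3 := smallm_eq_neg_bigM hd μ b k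
        linarith
      have hC1 : bigM μ b c < 2 * (β b + β c) - smallm μ b k := by
        have h3 : bigM μ b c - 2 * (β b + β c) < Mhatm b c := by
          rw [hMhatm]
          have := CB2 b c
          linarith
        linarith
      rcases hcOS with hcOs | hcS
      · -- 1-S-O*
        obtain ⟨hΔc, hηc⟩ := hcW1 hcOs
        obtain ⟨_, hgc2⟩ := hgapO c hcOs hΔc
        have hgc2b := hgc2 b hbS
        have hps : pGapSub P μ b = ((smallm μ b k : ℝ) : EReal) := by
          rw [pGapSub]; exact hkeq
        rw [hps, ← EReal.coe_add] at hgc2b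
        have h6 : 4 * β c < max (bigM μ b c) 0 + smallm μ b k := by exact_mod_cast hgc2b
        rcases le_or_gt (bigM μ b c) 0 with h | h
        · rw [max_eq_right h, zero_add] at h6
          have := hK1 k hkFG
          linarith
        · rw [max_eq_left h.le] at h6
          linarith
      · -- 1-S-S
        have hcO' : c ∉ OptSet P μ := hSO c hcS
        have hΔc : ((4 * β c : ℝ) : EReal) < pGapSub P μ c := by
          have := hcW3 hcS
          rw [pGap, if_neg hcO'] at this
          exact this
        rw [pGapSub] at hΔc
        obtain ⟨jc, hjcO, hjc1, hjcmax, hjceq⟩ := sup_attain hΔc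
        by_cases hjcb : jc = b
        · rw [hjcb] at hjc1 hjcmax
          have htr := smallm_trans hd μ c b k
          have hmaxk := hjcmax k hkO
          linarith [hk1, hβpos b]
        · have hjcFG : jc ∈ (Fhat ∪ G) \ {b} := ⟨hFhatFG jc hjcO.1, by simp [hjcb]⟩
          have h1 := hc2 jc hjcFG
          have h2 : Mhatm b jc < bigM μ b jc := by
            rw [hMhatm]
            have := CB1 b jc
            have := hβpos b
            have := hβpos jc
            linarith
          have h3 : bigM μ b c - 2 * (β b + β c) < Mhatm b c := by
            rw [hMhatm]
            have := CB2 b c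
            linarith
          have htr := bigM_trans hd μ b c jc
          have h4 : bigM μ c jc = - smallm μ c jc := by
            rw [smallm_eq_neg_bigM hd]; ring
          linarith [hS1, hjc1, hβpos b, hβpos c]
    · -- 1-I: b in I
      have hμb : μ b ∉ P := hIsub hbI
      have hη := hbW2 hbI
      by_cases hbF : b ∈ Fhat
      · have hμhb : μhat b ∈ P := by rw [hFhat] at hbF; exact hbF
        have h1 : etaD P (μ b) ≤ dist (μ b) (μhat b) := by
          rw [etaD, if_neg hμb]
          exact infDist_le_dist_of_mem hμhb
        have := dconf b
        have := hUpos b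
        linarith
      · have hγb := hγbneg hbF
        have hbG : b ∈ G := by rw [hG]; exact ⟨hbF, hγb⟩
        have := hinfeas b (Or.inr hbG) hμb
        linarith
  · -- CASE 2
    have hZ2nn : (0:EReal) ≤ Z2 := not_lt.1 hZ2neg
    have hZ1neg : Z1 < 0 := hnotstop.resolve_right hZ2neg
    have Tnn : ∀ i, i ∉ Ohat → (0:EReal) ≤ T i := by
      intro i hi
      calc (0:EReal) ≤ Z2 := hZ2nn
        _ ≤ T i := by rw [hZ2]; exact iInf₂_le_of_le i hi le_rfl
    have chain : ∀ n, b ∈ Ohat → ∀ x, x ∈ Fhat ∪ G → 0 < smallm μhat b x →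
        (Finset.univ.filter (fun j => ∀ α, μhat x α < μhat j α)).card = n → False := by
      intro n
      induction n using Nat.strong_induction_on with
      | _ n ih =>
        intro hbO x hx hsm hcard
        rcases hx with hxF | hxG
        · have hdom : Pdom (μhat b) (μhat x) := pdom_of_smallm_pos hd hsm
          have hbO' : b ∈ OptSet P μhat := by rw [hOhat] at hbO; exact hbO
          exact hbO'.2 x (by rw [hFhat] at hxF; exact hxF) hdom
        · have hxG' : x ∉ Fhat ∧ γ x < 0 := by rw [hG] at hxG; exact hxG
          have hxO : x ∉ Ohat := fun h => hxG'.1 (hOF x h)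
          have hTx := Tnn x hxO
          rw [(hT x).2 hxG'.1] at hTx
          have hξx : (0:EReal) ≤ ξ x := by
            rcases le_max_iff.1 hTx with h | h
            · exfalso
              have hγx : ((γ x : ℝ) : EReal) < 0 := by exact_mod_cast hxG'.2
              exact absurd h (not_le.2 hγx)
            · exact h
          rw [hξ x] at hξx
          obtain ⟨k, hk, hk0⟩ := sup_attain_nonneg hξx
          have hmm := hmhatm x k
          have hsmxk : 0 < smallm μhat x k := by
            have := hβpos x
            have := hβpos k
            linarith
          have hsmbk : 0 < smallm μhat b k := by
            have := smallm_trans hd μhat b x k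
            linarith
          have hkdomx : ∀ α, μhat x α < μhat k α := by
            intro α
            have := smallm_le (μ := μhat) x k α
            linarith
          have hsub : (Finset.univ.filter (fun j => ∀ α, μhat k α < μhat j α)) ⊆
              (Finset.univ.filter (fun j => ∀ α, μhat x α < μhat j α)) := by
            intro j hj
            simp only [Finset.mem_filter, Finset.mem_univ, true_and] at *
            intro α
            exact lt_trans (hkdomx α) (hj α)
          have hkmem : k ∈ Finset.univ.filter (fun j => ∀ α, μhat x α < μhat j α) := by
            simp only [Finset.mem_filter, Finset.mem_univ, true_and]
            exact hkdomx
          have hknot : k ∉ Finset.univ.filter (fun j => ∀ α, μhat k α < μhat j α) := by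
            simp only [Finset.mem_filter, Finset.mem_univ, true_and]
            intro h
            exact lt_irrefl _ (h ⟨0, hd⟩)
          have hlt : (Finset.univ.filter (fun j => ∀ α, μhat k α < μhat j α)).card < n := by
            rw [← hcard]
            exact Finset.card_lt_card ⟨hsub, fun hall => hknot (hall hkmem)⟩
          exact ih _ hlt hbO k hk.1 hsmbk rfl
    have caseS2 : b ∈ Ohat → b ∈ S → False := by
      intro hbO hbS
      have hbO' : b ∉ OptSet P μ := hSO b hbS
      have hΔb : ((4 * β b : ℝ) : EReal) < pGapSub P μ b := by
        have := hbW3 hbS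
        rw [pGap, if_neg hbO'] at this
        exact this
      rw [pGapSub] at hΔb
      obtain ⟨k, hkO, hk1, hkmax, hkeq⟩ := sup_attain hΔb
      have hkb : k ≠ b := by
        intro h
        rw [h] at hk1
        linarith [smallm_le (μ := μ) b b ⟨0, hd⟩, hβpos b]
      have hkFG : k ∈ (Fhat ∪ G) \ {b} := ⟨hFhatFG k hkO.1, by simp [hkb]⟩
      have hE1 : Mhatm b c < - smallm μ b k := by
        have h1 := hc2 k hkFG
        have h2 : Mhatm b k < bigM μ b k := by
          rw [hMhatm]
          have := CB1 b k
          have := hβpos b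
          have := hβpos k
          linarith
        have h3 := smallm_eq_neg_bigM hd μ b k
        linarith
      have hC1 : bigM μ b c < 2 * (β b + β c) - smallm μ b k := by
        have h3 : bigM μ b c - 2 * (β b + β c) < Mhatm b c := by
          rw [hMhatm]
          have := CB2 b c
          linarith
        linarith
      have hD1 : smallm μ b k - (β b + β c) < smallm μhat b c := by
        rw [smallm_eq_neg_bigM hd μhat b c]
        rw [hMhatm] at hE1
        linarith
      rcases hcOS with hcOs | hcS
      · obtain ⟨hΔc, hηc⟩ := hcW1 hcOs
        by_cases hcase : β b + β c < smallm μ b k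
        · have hmh : 0 < smallm μhat b c := by linarith
          exact chain _ hbO c hcFG hmh rfl
        · push_neg at hcase
          obtain ⟨_, hgc2⟩ := hgapO c hcOs hΔc
          have hgc2b := hgc2 b hbS
          have hps : pGapSub P μ b = ((smallm μ b k : ℝ) : EReal) := by
            rw [pGapSub]; exact hkeq
          rw [hps, ← EReal.coe_add] at hgc2b
          have h6 : 4 * β c < max (bigM μ b c) 0 + smallm μ b k := by exact_mod_cast hgc2b
          rcases le_or_gt (bigM μ b c) 0 with h | h
          · rw [max_eq_right h, zero_add] at h6
            linarith [hβpos b, hβpos c]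
          · rw [max_eq_left h.le] at h6
            linarith [hβpos b, hβpos c]
      · have hcO' : c ∉ OptSet P μ := hSO c hcS
        have hΔc : ((4 * β c : ℝ) : EReal) < pGapSub P μ c := by
          have := hcW3 hcS
          rw [pGap, if_neg hcO'] at this
          exact this
        rw [pGapSub] at hΔc
        obtain ⟨jc, hjcO, hjc1, hjcmax, hjceq⟩ := sup_attain hΔc
        by_cases hjcb : jc = b
        · rw [hjcb] at hjc1 hjcmax
          have htr := smallm_trans hd μ c b k
          have hmaxk := hjcmax k hkO
          linarith [hk1, hβpos b]
        · have hjcFG : jc ∈ (Fhat ∪ G) \ {b} := ⟨hFhatFG jc hjcO.1, by simp [hjcb]⟩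
          have h1 := hc2 jc hjcFG
          have h2 : Mhatm b jc < bigM μ b jc := by
            rw [hMhatm]
            have := CB1 b jc
            have := hβpos b
            have := hβpos jc
            linarith
          have h3 : bigM μ b c - 2 * (β b + β c) < Mhatm b c := by
            rw [hMhatm]
            have := CB2 b c
            linarith
          have htr := bigM_trans hd μ b c jc
          have h4 : bigM μ c jc = - smallm μ c jc := by
            rw [smallm_eq_neg_bigM hd]; ring
          have hβcb : β c < β b := by linarith [hjc1]
          have hmh : 0 < smallm μhat b c := by linarith [hk1, hD1, hβpos b]
          exact chain _ hbO c hcFG hmh rfl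
    by_cases hcmp : Z1F ≤ Z1PS
    · -- 2A
      obtain ⟨hbO, hγbeq⟩ := hb2 hZ2nn hcmp
      have hγb : γ b < 0 := by
        have h1 : Z1F < 0 := by
          rw [hZ1, inf_eq_left.2 hcmp] at hZ1neg
          exact hZ1neg
        rw [← hγbeq] at h1
        exact_mod_cast h1
      have hbF : b ∈ Fhat := hOF b hbO
      have hμhb : μhat b ∈ P := by rw [hFhat] at hbF; exact hbF
      have hηhatb : ηhat b < U b := (hγiff b).1 hγb
      rw [hηhat b, etaD, if_pos hμhb] at hηhatb
      rcases hpart b with hbOs | hbS | hbI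
      · obtain ⟨_, hηb⟩ := hbW1 hbOs
        have h1 : etaD P (μ b) ≤ infDist (μhat b) Pᶜ + dist (μ b) (μhat b) := by
          rw [etaD, if_pos hbOs.1]
          exact infDist_le_infDist_add_dist
        linarith [dconf b]
      · exact caseS2 hbO hbS
      · have hμb : μ b ∉ P := hIsub hbI
        have hη := hbW2 hbI
        have h1 : etaD P (μ b) ≤ dist (μ b) (μhat b) := by
          rw [etaD, if_neg hμb]
          exact infDist_le_dist_of_mem hμhb
        linarith [dconf b, hUpos b]
    · -- 2B
      push_neg at hcmp
      obtain ⟨hbO, hinfeq⟩ := hb3 hZ2nn hcmp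
      have hZ1PSneg : Z1PS < 0 := by
        rw [hZ1, inf_eq_right.2 hcmp.le] at hZ1neg
        exact hZ1neg
      rw [← hinfeq] at hZ1PSneg
      obtain ⟨a, ha, hMa⟩ := inf_exists_neg hZ1PSneg
      have haFG : a ∈ (Fhat ∪ G) \ {b} := ⟨Or.inl (hOF a ha.1), ha.2⟩
      have hG0 : bigM μ b c < 2 * (β b + β c) := by
        have h1 := hc2 a haFG
        have h3 : bigM μ b c - 2 * (β b + β c) < Mhatm b c := by
          rw [hMhatm]
          have := CB2 b c
          linarith
        linarith
      rcases hpart b with hbOs | hbS | hbI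
      · obtain ⟨hΔb, hηb⟩ := hbW1 hbOs
        obtain ⟨hgb1, hgb2⟩ := hgapO b hbOs hΔb
        rcases hcOS with hcOs | hcS
        · obtain ⟨hΔc, hηc⟩ := hcW1 hcOs
          obtain ⟨hgc1, _⟩ := hgapO c hcOs hΔc
          have h1 := hgb1 c hcOs hcb
          have h2 := hgc1 b hbOs (Ne.symm hcb)
          have h3 := min_le_left (bigM μ b c) (bigM μ c b)
          have h4 := min_le_right (bigM μ c b) (bigM μ b c)
          linarith
        · have hcO' : c ∉ OptSet P μ := hSO c hcS
          have hΔc : ((4 * β c : ℝ) : EReal) < pGapSub P μ c := by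
            have := hcW3 hcS
            rw [pGap, if_neg hcO'] at this
            exact this
          rw [pGapSub] at hΔc
          obtain ⟨jc, hjcO, hjc1, hjcmax, hjceq⟩ := sup_attain hΔc
          by_cases hjcb : jc = b
          · rw [hjcb] at hjc1 hjceq
            have hgb2c := hgb2 c hcS
            have hps : pGapSub P μ c = ((smallm μ c b : ℝ) : EReal) := by
              rw [pGapSub]; exact hjceq
            rw [hps, ← EReal.coe_add] at hgb2c
            have h6 : 4 * β b < max (bigM μ c b) 0 + smallm μ c b := by exact_mod_cast hgb2c
            have hMt : bigM μ c b = - smallm μ c b := by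
              rw [smallm_eq_neg_bigM hd]; ring
            have hmax0 : max (bigM μ c b) 0 = 0 := by
              rw [max_eq_right]
              rw [hMt]
              linarith [hβpos c, hjc1]
            rw [hmax0, zero_add] at h6
            have h5 := smallm_le_bigM hd μ b c
            linarith [hβpos b, hβpos c, hG0, hjc1]
          · have h1 := hgb1 jc hjcO hjcb
            have htr := bigM_trans hd μ b c jc
            have h4 : bigM μ c jc = - smallm μ c jc := by
              rw [smallm_eq_neg_bigM hd]; ring
            have h3 := min_le_left (bigM μ b jc) (bigM μ jc b)
            linarith [hβpos b, hβpos c, hG0, hjc1]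
      · exact caseS2 hbO hbS
      · have hbF : b ∈ Fhat := hOF b hbO
        have hμhb : μhat b ∈ P := by rw [hFhat] at hbF; exact hbF
        have hμb : μ b ∉ P := hIsub hbI
        have hη := hbW2 hbI
        have h1 : etaD P (μ b) ≤ dist (μ b) (μhat b) := by
          rw [etaD, if_neg hμb]
          exact infDist_le_dist_of_mem hμhb
        linarith [dconf b, hUpos b]
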